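/- Let B be an n×n complex matrix and suppose there exists a skew-adjoint matrix K (Kᴴ = −K) satisfying KB − BK = −iB. Then for every t ∈ ℝ there exists a unitary matrix U with e^{it} B = U B Uᴴ. -/

import Mathlib

open Matrix

open NormedSpace in
lemma semiconj_exp_aux {𝔸 : Type*} [NormedRing 𝔸] [NormedAlgebra ℂ 𝔸] [CompleteSpace 𝔸]
    {B X Y : 𝔸} (h : SemiconjBy B Y X) : B * exp Y = exp X * B := by
  simp only [exp_eq_tsum ℂ]
  rw [← (expSeries_summable' (𝕂 := ℂ) Y).tsum_mul_left B,
    ← (expSeries_summable' (𝕂 := ℂ) X).tsum_mul_right B]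
  refine tsum_congr fun n => ?_
  rw [mul_smul_comm, smul_mul_assoc, (h.pow_right n).eq]

open NormedSpace in
lemma matrix_semiconj_exp {n : ℕ} {B X Y : Matrix (Fin n) (Fin n) ℂ}
    (h : SemiconjBy B Y X) : B * exp Y = exp X * B := by
  letI : SeminormedRing (Matrix (Fin n) (Fin n) ℂ) := Matrix.linftyOpSemiNormedRing
  letI : NormedRing (Matrix (Fin n) (Fin n) ℂ) := Matrix.linftyOpNormedRing
  letI : NormedAlgebra ℂ (Matrix (Fin n) (Fin n) ℂ) := Matrix.linftyOpNormedAlgebra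
  exact semiconj_exp_aux h

open NormedSpace in
lemma matrix_exp_smul_one {n : ℕ} (c : ℂ) :
    exp (c • (1 : Matrix (Fin n) (Fin n) ℂ)) = Complex.exp c • 1 := by
  letI : SeminormedRing (Matrix (Fin n) (Fin n) ℂ) := Matrix.linftyOpSemiNormedRing
  letI : NormedRing (Matrix (Fin n) (Fin n) ℂ) := Matrix.linftyOpNormedRing
  letI : NormedAlgebra ℂ (Matrix (Fin n) (Fin n) ℂ) := Matrix.linftyOpNormedAlgebra
  rw [← Algebra.algebraMap_eq_smul_one]
  erw [← algebraMap_exp_comm]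
  rw [Algebra.algebraMap_eq_smul_one, Complex.exp_eq_exp_ℂ]

open NormedSpace in
/-- if there is a skew-adjoint `K` with `[K, B] = -iB`, then `e^{it} B` is
unitarily similar to `B` for every `t`. -/
theorem skew_commutator_implies_unitary_rotation (n : ℕ) (B : Matrix (Fin n) (Fin n) ℂ)
    (h : ∃ K : Matrix (Fin n) (Fin n) ℂ, Kᴴ = -K ∧ K * B - B * K = (-Complex.I) • B) :
    ∀ t : ℝ, ∃ U : Matrix (Fin n) (Fin n) ℂ,
      U * Uᴴ = 1 ∧ Complex.exp (Complex.I * t) • B = U * B * Uᴴ := by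
  obtain ⟨K, hK, hc⟩ := h
  intro t
  have hUH : (exp ((-(t : ℂ)) • K))ᴴ = exp ((t : ℂ) • K) := by
    rw [← Matrix.exp_conjTranspose, Matrix.conjTranspose_smul, hK]
    congr 1
    simp
  have hmul : exp ((-(t : ℂ)) • K) * exp ((t : ℂ) • K) = 1 := by
    rw [← Matrix.exp_add_of_commute _ _ (((Commute.refl K).smul_left _).smul_right _)]
    rw [← add_smul]
    norm_num
    
  refine ⟨exp ((-(t : ℂ)) • K), ?_, ?_⟩
  · rw [hUH]; exact hmul
  · -- semiconjugation
    have hsemi : SemiconjBy B ((-(t : ℂ)) • K + ((t : ℂ) * Complex.I) • (1 : Matrix (Fin n) (Fin n) ℂ))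
        ((-(t : ℂ)) • K) := by
      unfold SemiconjBy
      rw [mul_add, mul_smul_comm, mul_smul_comm, smul_mul_assoc, mul_one]
      have : B * K = K * B + Complex.I • B := by
        have := hc
        rw [sub_eq_iff_eq_add] at this
        rw [this]
        simp [neg_smul]
      rw [this]
      module
    have key := matrix_semiconj_exp hsemi
    have hcomm : Commute ((-(t : ℂ)) • K) (((t : ℂ) * Complex.I) • (1 : Matrix (Fin n) (Fin n) ℂ)) :=
      (((Commute.one_right K).smul_left _).smul_right _)
    rw [add_comm, Matrix.exp_add_of_commute _ _ hcomm.symm, matrix_exp_smul_one,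
      smul_mul_assoc, one_mul, mul_smul_comm] at key
    rw [hUH, ← key, smul_mul_assoc, mul_assoc, hmul, mul_one, mul_comm (t:ℂ) Complex.I]
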